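/- arXiv:1707.03639 — 5 statements merged into one kernel-verified Lean document; each statement's English description precedes it below -/
import Mathlib

section
/- Let S be a sequence over the cyclic group C_n with |S| = kn + n − 1, where k, n are positive integers. Then S contains a product-one (zero-sum) subsequence T with |T| = kn. -/
/-- Every sequence over `C_n` of length `kn + n − 1` contains a zero-sum
subsequence of length `kn`. -/
theorem zero_sum_subseq_of_length_kn {n k : ℕ} (hn : 0 < n) (hk : 0 < k)
    (S : Multiset (ZMod n)) (hS : Multiset.card S = k * n + n - 1) :
    ∃ T ≤ S, Multiset.card T = k * n ∧ T.sum = 0 := by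
  induction k generalizing S with
  | zero => omega
  | succ k ih =>
    have h : (k + 1) * n = k * n + n := by ring
    obtain ⟨t, hts, htcard, htsum⟩ := ZMod.erdos_ginzburg_ziv_multiset S (by omega)
    rcases Nat.eq_zero_or_pos k with rfl | hk'
    · exact ⟨t, hts, by simpa using htcard, htsum⟩
    · obtain ⟨T, hTle, hTcard, hTsum⟩ := ih hk' (S - t) (by
        rw [Multiset.card_sub hts, hS, htcard]; omega)
      refine ⟨T + t, ?_, by simp [hTcard, htcard]; ring, by simp [htsum, hTsum]⟩
      calc T + t ≤ (S - t) + t := add_le_add hTle (le_refl t)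
        _ = S := tsub_add_cancel_of_le hts
end

section
/- Let m be a positive integer whose largest prime divisor is p, and let G = C_m ⋉_φ C_m be a semidirect product generated by x, y with ord(x) = ord(y) = m, ⟨x⟩ ∩ ⟨y⟩ = {1}, and yxy⁻¹ = x^s for some s coprime to m. Then N = ⟨x^{m/p}, y^{m/p}⟩ is a normal subgroup of G isomorphic to C_p × C_p, and G/N ≅ C_{m/p} ⋉_φ C_{m/p}. -/
/-- If every prime factor of `k` is less than `p`, then `p` does not divide `φ(k)`. -/
lemma aux_not_dvd_totient {p : ℕ} (hp : p.Prime) :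
    ∀ k : ℕ, 0 < k → (∀ q : ℕ, q.Prime → q ∣ k → q < p) → ¬ p ∣ k.totient := by
  intro k
  induction k using Nat.strong_induction_on with
  | _ k IH =>
    intro hk hq
    rcases eq_or_lt_of_le (show 1 ≤ k from hk) with h1 | h2
    · rw [← h1]
      simpa using hp.one_lt.ne'
    · -- k ≥ 2
      have hk1 : k ≠ 1 := by omega
      have hk0 : k ≠ 0 := by omega
      set q := k.minFac with hqdef
      have hqp : q.Prime := Nat.minFac_prime hk1
      have hqdvd : q ∣ k := Nat.minFac_dvd k
      have hqlt : q < p := hq q hqp hqdvd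
      have hq2 : 2 ≤ q := hqp.two_le
      set c := k.factorization q with hcdef
      have hc : 0 < c := hqp.factorization_pos_of_dvd hk0 hqdvd
      set k' := k / q ^ c with hk'def
      have hsplit : q ^ c * k' = k := Nat.ordProj_mul_ordCompl_eq_self k q
      have hk'dvd : k' ∣ k := Nat.ordCompl_dvd k q
      have hk'0 : k' ≠ 0 := by
        intro h; rw [h, mul_zero] at hsplit; exact hk0 hsplit.symm
      have hcop : (q ^ c).Coprime k' := (Nat.coprime_ordCompl hqp hk0).pow_left _
      have hqc1 : 1 < q ^ c := by
        calc 1 < q := by omega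
        _ ≤ q ^ c := Nat.le_self_pow hc.ne' q
      have hk'lt : k' < k := by
        have := (Nat.lt_mul_iff_one_lt_left (Nat.pos_of_ne_zero hk'0)).mpr hqc1
        rwa [hsplit] at this
      have hIH : ¬ p ∣ k'.totient :=
        IH k' hk'lt (Nat.pos_of_ne_zero hk'0)
          (fun r hr hrd => hq r hr (hrd.trans hk'dvd))
      have htot : k.totient = q ^ (c - 1) * (q - 1) * k'.totient := by
        rw [← hsplit, Nat.totient_mul hcop, Nat.totient_prime_pow hqp hc]
      rw [htot]
      intro hdvd
      rcases (hp.dvd_mul.mp hdvd) with h | h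
      · rcases hp.dvd_mul.mp h with h | h
        · have h2 := hp.dvd_of_dvd_pow h
          have := (Nat.prime_dvd_prime_iff_eq hp hqp).mp h2
          omega
        · have := Nat.le_of_dvd (by omega) h
          omega
      · exact hIH h

lemma aux_key {m p s : ℕ} (hm : 0 < m) (hp : p.Prime) (hpm : p ∣ m)
    (hmax : ∀ q : ℕ, q.Prime → q ∣ m → q ≤ p) (hs : Nat.Coprime s m)
    (hsm : s ^ m ≡ 1 [MOD m]) :
    s ^ (m / p) ≡ 1 [MOD (m / p)] ∧ s ^ (m / p) ≡ 1 [MOD p] := by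
  haveI : Fact p.Prime := ⟨hp⟩
  set n := m / p with hndef
  have hmn : m = p * n := (Nat.mul_div_cancel' hpm).symm
  have hn0 : 0 < n := by
    rcases Nat.eq_zero_or_pos n with h | h
    · rw [h, mul_zero] at hmn; omega
    · exact h
  haveI : NeZero n := ⟨hn0.ne'⟩
  have hnm : n ∣ m := Nat.div_dvd_of_dvd hpm
  constructor
  · -- mod n
    have hsn : s.Coprime n := hs.coprime_dvd_right hnm
    set u := ZMod.unitOfCoprime s hsn with hudef
    set d := orderOf u with hddef
    have hum : u ^ m = 1 := by
      ext
      push_cast [hudef, ZMod.coe_unitOfCoprime]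
      rw [← Nat.cast_pow]
      calc ((s ^ m : ℕ) : ZMod n) = ((1 : ℕ) : ZMod n) :=
        (ZMod.natCast_eq_natCast_iff _ _ _).mpr (hsm.of_dvd hnm)
      _ = 1 := by norm_num
    have hdm : d ∣ m := orderOf_dvd_of_pow_eq_one hum
    have hdtot : d ∣ n.totient := by
      rw [← ZMod.card_units_eq_totient n]
      exact orderOf_dvd_card
    have hd0 : d ≠ 0 := (orderOf_pos u).ne'
    have hdn : d ∣ n := by
      rw [← Nat.factorization_le_iff_dvd hd0 hn0.ne']
      intro q
      by_cases hq : q.Prime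
      · by_cases hqp : q = p
        · subst hqp
          have h1 : d.factorization q ≤ n.totient.factorization q :=
            (Nat.factorization_le_iff_dvd hd0 (Nat.totient_pos.mpr hn0).ne').mpr hdtot q
          refine h1.trans ?_
          have hq2 : 2 ≤ q := hq.two_le
          by_cases hpn : q ∣ n
          · set b := n.factorization q with hbdef
            have hb : 0 < b := hq.factorization_pos_of_dvd hn0.ne' hpn
            set n' := n / q ^ b with hn'def
            have hsplit : q ^ b * n' = n := Nat.ordProj_mul_ordCompl_eq_self n q
            have hn'0 : n' ≠ 0 := by
              intro h; rw [h, mul_zero] at hsplit; exact hn0.ne' hsplit.symm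
            have hcopq : q.Coprime n' := Nat.coprime_ordCompl hq hn0.ne'
            have hcop : (q ^ b).Coprime n' := hcopq.pow_left _
            have hnotdvd : ¬ q ∣ n'.totient := by
              refine aux_not_dvd_totient hq n' (Nat.pos_of_ne_zero hn'0) ?_
              intro r hr hrd
              have hrm : r ∣ m := (hrd.trans (Nat.ordCompl_dvd n q)).trans hnm
              rcases eq_or_lt_of_le (hmax r hr hrm) with h | h
              · subst h
                exact absurd hrd (hq.coprime_iff_not_dvd.mp hcopq)
              · exact h
            have htot : n.totient = q ^ (b - 1) * (q - 1) * n'.totient := by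
              rw [← hsplit, Nat.totient_mul hcop, Nat.totient_prime_pow hq hb]
            rw [htot, Nat.factorization_mul
              (Nat.mul_ne_zero (pow_ne_zero _ (by omega)) (by omega))
              (Nat.totient_pos.mpr (Nat.pos_of_ne_zero hn'0)).ne',
              Nat.factorization_mul (pow_ne_zero _ (by omega)) (by omega)]
            simp only [Finsupp.add_apply]
            have e1 : (q ^ (b-1)).factorization q = b - 1 := by
              rw [Nat.Prime.factorization_pow hq]; simp
            have e2 : (q - 1).factorization q = 0 :=
              Nat.factorization_eq_zero_of_not_dvd (by
                intro h; have := Nat.le_of_dvd (by omega) h; omega)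
            have e3 : n'.totient.factorization q = 0 :=
              Nat.factorization_eq_zero_of_not_dvd hnotdvd
            rw [e1, e2, e3]
            omega
          · have hnd : ¬ q ∣ n.totient := by
              refine aux_not_dvd_totient hq n hn0 ?_
              intro r hr hrd
              rcases eq_or_lt_of_le (hmax r hr (hrd.trans hnm)) with h | h
              · subst h; exact absurd hrd hpn
              · exact h
            rw [Nat.factorization_eq_zero_of_not_dvd hnd]
            exact Nat.zero_le _
        · have h1 : d.factorization q ≤ m.factorization q :=
            (Nat.factorization_le_iff_dvd hd0 hm.ne').mpr hdm q
          refine h1.trans ?_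
          rw [hmn, Nat.factorization_mul (hp.pos).ne' hn0.ne']
          simp only [Finsupp.add_apply, hp.factorization]
          rw [Finsupp.single_apply]
          simp [Ne.symm hqp]
      · simp [Nat.factorization_eq_zero_of_not_prime _ hq]
    have hun : u ^ n = 1 := orderOf_dvd_iff_pow_eq_one.mp hdn
    have h2 : ((s ^ n : ℕ) : ZMod n) = ((1 : ℕ) : ZMod n) := by
      have := congrArg (Units.val) hun
      push_cast [hudef, ZMod.coe_unitOfCoprime] at this
      push_cast
      simpa using this
    exact (ZMod.natCast_eq_natCast_iff _ _ _).mp h2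
  · -- mod p
    have hsp : s.Coprime p := hs.coprime_dvd_right hpm
    set u := ZMod.unitOfCoprime s hsp with hudef
    set d := orderOf u with hddef
    have hum : u ^ m = 1 := by
      ext
      push_cast [hudef, ZMod.coe_unitOfCoprime]
      rw [← Nat.cast_pow]
      calc ((s ^ m : ℕ) : ZMod p) = ((1 : ℕ) : ZMod p) :=
        (ZMod.natCast_eq_natCast_iff _ _ _).mpr (hsm.of_dvd hpm)
      _ = 1 := by norm_num
    have hdm : d ∣ m := orderOf_dvd_of_pow_eq_one hum
    have hdp1 : d ∣ p - 1 := by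
      rw [← ZMod.card_units p]
      exact orderOf_dvd_card
    have hpd : ¬ p ∣ d := by
      intro h
      have hd0 : 0 < d := orderOf_pos u
      have h1 := Nat.le_of_dvd hd0 h
      have h2 := Nat.le_of_dvd (by have := hp.two_le; omega) hdp1
      have := hp.two_le
      omega
    have hdn : d ∣ n := by
      have hcop : d.Coprime p := (hp.coprime_iff_not_dvd.mpr hpd).symm
      exact hcop.dvd_of_dvd_mul_left (hmn ▸ hdm)
    have hun : u ^ n = 1 := orderOf_dvd_iff_pow_eq_one.mp hdn
    have h2 : ((s ^ n : ℕ) : ZMod p) = ((1 : ℕ) : ZMod p) := by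
      have := congrArg (Units.val) hun
      push_cast [hudef, ZMod.coe_unitOfCoprime] at this
      push_cast
      simpa using this
    exact (ZMod.natCast_eq_natCast_iff _ _ _).mp h2

/-- Concrete model for `C_k ⋉ C_k` where conjugation acts by `s`-th powers. -/
@[ext]
structure Tw (k s : ℕ) where
  a : ZMod k
  b : ZMod k

namespace Tw

variable {k s : ℕ}

lemma spow (h1 : (s : ZMod k) ^ k = 1) (j : ℕ) :
    (s : ZMod k) ^ (j % k) = (s : ZMod k) ^ j := by
  conv_rhs => rw [← Nat.mod_add_div j k]
  rw [pow_add, pow_mul, h1, one_pow, mul_one]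

instance group [NeZero k] [h1 : Fact ((s : ZMod k) ^ k = 1)] : Group (Tw k s) where
  mul g h := ⟨g.a + (s : ZMod k) ^ g.b.val * h.a, g.b + h.b⟩
  one := ⟨0, 0⟩
  inv g := ⟨-((s : ZMod k) ^ (-g.b).val * g.a), -g.b⟩
  mul_assoc g h l := by
    ext
    · show g.a + (s : ZMod k) ^ g.b.val * h.a + (s : ZMod k) ^ (g.b + h.b).val * l.a
        = g.a + (s : ZMod k) ^ g.b.val * (h.a + (s : ZMod k) ^ h.b.val * l.a)
      have : (s : ZMod k) ^ (g.b + h.b).val = (s : ZMod k) ^ g.b.val * (s : ZMod k) ^ h.b.val := by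
        rw [ZMod.val_add, spow h1.out, pow_add]
      rw [this]; ring
    · show g.b + h.b + l.b = g.b + (h.b + l.b)
      rw [add_assoc]
  one_mul g := by
    ext
    · show (0 : ZMod k) + (s : ZMod k) ^ (0 : ZMod k).val * g.a = g.a
      simp
    · show (0 : ZMod k) + g.b = g.b
      simp
  mul_one g := by
    ext
    · show g.a + (s : ZMod k) ^ g.b.val * 0 = g.a
      simp
    · show g.b + 0 = g.b
      simp
  inv_mul_cancel g := by
    ext
    · show -((s : ZMod k) ^ (-g.b).val * g.a) + (s : ZMod k) ^ (-g.b).val * g.a = (0 : ZMod k)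
      simp
    · show -g.b + g.b = 0
      simp

variable [NeZero k] [h1 : Fact ((s : ZMod k) ^ k = 1)]

lemma mul_def (g h : Tw k s) :
    g * h = ⟨g.a + (s : ZMod k) ^ g.b.val * h.a, g.b + h.b⟩ := rfl

lemma one_def : (1 : Tw k s) = ⟨0, 0⟩ := rfl

/-- The `x`-axis homomorphism. -/
def homX : Multiplicative (ZMod k) →* Tw k s :=
  MonoidHom.mk' (fun a => ⟨Multiplicative.toAdd a, 0⟩) (by
    intro a b
    rw [mul_def]
    ext <;> simp [ZMod.val_zero])

/-- The `y`-axis homomorphism. -/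
def homY : Multiplicative (ZMod k) →* Tw k s :=
  MonoidHom.mk' (fun b => ⟨0, Multiplicative.toAdd b⟩) (by
    intro a b
    rw [mul_def]
    ext <;> simp)

lemma xpow (c : ZMod k) (j : ℕ) : (⟨c, 0⟩ : Tw k s) ^ j = ⟨j • c, 0⟩ := by
  have h := map_pow (homX (k := k) (s := s)) (Multiplicative.ofAdd c) j
  simpa [homX, MonoidHom.mk'_apply, ← ofAdd_nsmul] using h.symm

lemma ypow (c : ZMod k) (j : ℕ) : (⟨0, c⟩ : Tw k s) ^ j = ⟨0, j • c⟩ := by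
  have h := map_pow (homY (k := k) (s := s)) (Multiplicative.ofAdd c) j
  simpa [homY, MonoidHom.mk'_apply, ← ofAdd_nsmul] using h.symm

lemma xzpow (c : ZMod k) (j : ℤ) : (⟨c, 0⟩ : Tw k s) ^ j = ⟨j • c, 0⟩ := by
  have h := map_zpow (homX (k := k) (s := s)) (Multiplicative.ofAdd c) j
  simpa [homX, MonoidHom.mk'_apply, ← ofAdd_zsmul] using h.symm

lemma yzpow (c : ZMod k) (j : ℤ) : (⟨0, c⟩ : Tw k s) ^ j = ⟨0, j • c⟩ := by
  have h := map_zpow (homY (k := k) (s := s)) (Multiplicative.ofAdd c) j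
  simpa [homY, MonoidHom.mk'_apply, ← ofAdd_zsmul] using h.symm

end Tw

/-- Reduction homomorphism `Tw m s →* Tw n s` for `n ∣ m`. -/
def Tw.red {m n s : ℕ} [NeZero m] [NeZero n] [h1 : Fact ((s : ZMod m) ^ m = 1)]
    [h2 : Fact ((s : ZMod n) ^ n = 1)] (h : n ∣ m) : Tw m s →* Tw n s :=
  MonoidHom.mk' (fun g => ⟨ZMod.castHom h (ZMod n) g.a, ZMod.castHom h (ZMod n) g.b⟩) (by
    intro g h'
    rw [Tw.mul_def, Tw.mul_def]
    ext
    · show ZMod.castHom h (ZMod n) (g.a + (s : ZMod m) ^ g.b.val * h'.a)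
        = ZMod.castHom h (ZMod n) g.a
          + (s : ZMod n) ^ ((ZMod.castHom h (ZMod n)) g.b).val * ZMod.castHom h (ZMod n) h'.a
      rw [map_add, map_mul, map_pow, map_natCast]
      congr 2
      -- (s : ZMod n) ^ g.b.val = (s : ZMod n) ^ (cast g.b).val
      have hv : ((ZMod.castHom h (ZMod n)) g.b).val = g.b.val % n := by
        rw [ZMod.castHom_apply, ← ZMod.natCast_val, ZMod.val_natCast]
      rw [hv, Tw.spow h2.out]
    · show ZMod.castHom h (ZMod n) (g.b + h'.b)
        = ZMod.castHom h (ZMod n) g.b + ZMod.castHom h (ZMod n) h'.b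
      rw [map_add])
/-- Let `G = ⟨x, y⟩ ≅ C_m ⋉_φ C_m` with `p` the largest prime divisor of `m`.
Then `N = ⟨x^{m/p}, y^{m/p}⟩` is a normal subgroup isomorphic to `C_p × C_p`,
and `G/N ≅ C_{m/p} ⋉_φ C_{m/p}` (expressed via a surjective homomorphism with
kernel `N` onto a group with the corresponding presentation). -/
theorem normal_CpCp_subgroup {G : Type*} [Group G] (m p s : ℕ) (hm : 0 < m)
    (hp : p.Prime) (hpm : p ∣ m) (hmax : ∀ q : ℕ, q.Prime → q ∣ m → q ≤ p)
    (x y : G) (hx : orderOf x = m) (hy : orderOf y = m)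
    (hgen : Subgroup.closure ({x, y} : Set G) = ⊤)
    (hint : Subgroup.zpowers x ⊓ Subgroup.zpowers y = ⊥)
    (hrel : y * x * y⁻¹ = x ^ s) (hs : Nat.Coprime s m) :
    (Subgroup.closure ({x ^ (m / p), y ^ (m / p)} : Set G)).Normal ∧
    Nonempty (↥(Subgroup.closure ({x ^ (m / p), y ^ (m / p)} : Set G)) ≃*
      Multiplicative (ZMod p × ZMod p)) ∧
    ∃ (H : Type) (_ : Group H) (π : G →* H),
      Function.Surjective π ∧
      π.ker = Subgroup.closure ({x ^ (m / p), y ^ (m / p)} : Set G) ∧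
      orderOf (π x) = m / p ∧ orderOf (π y) = m / p ∧
      Subgroup.closure ({π x, π y} : Set H) = ⊤ ∧
      Subgroup.zpowers (π x) ⊓ Subgroup.zpowers (π y) = ⊥ ∧
      π y * π x * (π y)⁻¹ = π x ^ s := by
  haveI : Fact p.Prime := ⟨hp⟩
  haveI : NeZero p := ⟨hp.pos.ne'⟩
  set n := m / p with hndef
  have hmn : m = p * n := (Nat.mul_div_cancel' hpm).symm
  have hn0 : 0 < n := by
    rcases Nat.eq_zero_or_pos n with h | h
    · rw [h, mul_zero] at hmn; omega
    · exact h
  have hp2 : 2 ≤ p := hp.two_le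
  have hm2 : 2 ≤ m := by nlinarith
  have hnltm : n < m := by nlinarith
  haveI : NeZero n := ⟨hn0.ne'⟩
  haveI : NeZero m := ⟨hm.ne'⟩
  haveI : Fact (1 < m) := ⟨hm2⟩
  have hnm : n ∣ m := Nat.div_dvd_of_dvd hpm
  -- basic commutation facts in G
  have hconj1 : ∀ c : ℕ, y * x ^ c = x ^ (s * c) * y := by
    intro c
    have h1 : y * x ^ c * y⁻¹ = x ^ (s * c) := by
      rw [← conj_pow, hrel, ← pow_mul]
    calc y * x ^ c = y * x ^ c * y⁻¹ * y := by group
    _ = x ^ (s * c) * y := by rw [h1]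
  have hyx : ∀ b c : ℕ, y ^ b * x ^ c = x ^ (s ^ b * c) * y ^ b := by
    intro b
    induction b with
    | zero => intro c; simp
    | succ b IH =>
      intro c
      calc y ^ (b + 1) * x ^ c = y ^ b * (y * x ^ c) := by rw [pow_succ, mul_assoc]
      _ = y ^ b * (x ^ (s * c) * y) := by rw [hconj1]
      _ = (y ^ b * x ^ (s * c)) * y := by rw [mul_assoc]
      _ = x ^ (s ^ b * (s * c)) * y ^ b * y := by rw [IH]
      _ = x ^ (s ^ (b + 1) * c) * y ^ (b + 1) := by
          rw [mul_assoc, ← pow_succ]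
          ring_nf
  have hym : y ^ m = 1 := by rw [← hy]; exact pow_orderOf_eq_one y
  have hsm : s ^ m ≡ 1 [MOD m] := by
    have h1 := hyx m 1
    rw [hym, one_mul, mul_one, mul_one] at h1
    have h2 : x ^ (s ^ m) = x ^ 1 := by simpa using h1.symm
    have := pow_eq_pow_iff_modEq.mp h2
    rwa [hx] at this
  obtain ⟨key1, key2⟩ := aux_key hm hp hpm hmax hs hsm
  -- ZMod power facts
  have hfm : ((s : ZMod m)) ^ m = 1 := by
    have : ((s ^ m : ℕ) : ZMod m) = ((1 : ℕ) : ZMod m) :=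
      (ZMod.natCast_eq_natCast_iff _ _ _).mpr hsm
    push_cast at this
    simpa using this
  have hfn : ((s : ZMod n)) ^ n = 1 := by
    have : ((s ^ n : ℕ) : ZMod n) = ((1 : ℕ) : ZMod n) :=
      (ZMod.natCast_eq_natCast_iff _ _ _).mpr key1
    push_cast at this
    simpa using this
  haveI : Fact (((s : ZMod m)) ^ m = 1) := ⟨hfm⟩
  haveI : Fact (((s : ZMod n)) ^ n = 1) := ⟨hfn⟩
  have hxc : ∀ j : ℕ, x ^ (ZMod.val (j : ZMod m)) = x ^ j := by
    intro j
    rw [ZMod.val_natCast, ← hx, pow_mod_orderOf]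
  have hyc : ∀ j : ℕ, y ^ (ZMod.val (j : ZMod m)) = y ^ j := by
    intro j
    rw [ZMod.val_natCast, ← hy, pow_mod_orderOf]
  -- the homomorphism from the model to G
  let θ : Tw m s →* G := MonoidHom.mk' (fun g => x ^ g.a.val * y ^ g.b.val) (by
    intro g h
    show x ^ ((g.a + (s : ZMod m) ^ g.b.val * h.a).val) * y ^ ((g.b + h.b).val)
      = (x ^ g.a.val * y ^ g.b.val) * (x ^ h.a.val * y ^ h.b.val)
    have e1 : g.a + (s : ZMod m) ^ g.b.val * h.a
        = ((g.a.val + s ^ g.b.val * h.a.val : ℕ) : ZMod m) := by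
      push_cast [ZMod.natCast_val, ZMod.cast_id]
      rfl
    have e2 : g.b + h.b = ((g.b.val + h.b.val : ℕ) : ZMod m) := by
      push_cast [ZMod.natCast_val, ZMod.cast_id]
      rfl
    rw [e1, e2, hxc, hyc]
    calc x ^ (g.a.val + s ^ g.b.val * h.a.val) * y ^ (g.b.val + h.b.val)
        = x ^ g.a.val * ((x ^ (s ^ g.b.val * h.a.val) * y ^ g.b.val) * y ^ h.b.val) := by
          rw [pow_add, pow_add]; group
    _ = x ^ g.a.val * ((y ^ g.b.val * x ^ h.a.val) * y ^ h.b.val) := by rw [hyx]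
    _ = (x ^ g.a.val * y ^ g.b.val) * (x ^ h.a.val * y ^ h.b.val) := by group)
  have hθapp : ∀ g : Tw m s, θ g = x ^ g.a.val * y ^ g.b.val := fun g => rfl
  have hθx : θ ⟨1, 0⟩ = x := by
    rw [hθapp]
    simp [ZMod.val_one]
  have hθy : θ ⟨0, 1⟩ = y := by
    rw [hθapp]
    simp [ZMod.val_one]
  -- injectivity of θ
  have hsep : ∀ a b : ℕ, x ^ a * y ^ b = 1 → x ^ a = 1 ∧ y ^ b = 1 := by
    intro a b hab
    have h1 : x ^ a = (y ^ b)⁻¹ := by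
      rw [eq_inv_iff_mul_eq_one]; exact hab
    have h2 : x ^ a ∈ Subgroup.zpowers x ⊓ Subgroup.zpowers y := by
      refine Subgroup.mem_inf.mpr ⟨⟨(a : ℤ), by simp⟩, ?_⟩
      rw [h1]
      exact Subgroup.inv_mem _ ⟨(b : ℤ), by simp⟩
    rw [hint, Subgroup.mem_bot] at h2
    refine ⟨h2, ?_⟩
    rw [h2] at h1
    simpa using h1.symm
  have hθinj : Function.Injective θ := by
    rw [injective_iff_map_eq_one]
    intro g hg
    rw [hθapp] at hg
    obtain ⟨h1, h2⟩ := hsep _ _ hg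
    have ha : g.a = 0 := by
      have := orderOf_dvd_of_pow_eq_one h1
      rw [hx] at this
      have := Nat.eq_zero_of_dvd_of_lt this (ZMod.val_lt g.a)
      exact (ZMod.val_eq_zero _).mp this
    have hb : g.b = 0 := by
      have := orderOf_dvd_of_pow_eq_one h2
      rw [hy] at this
      have := Nat.eq_zero_of_dvd_of_lt this (ZMod.val_lt g.b)
      exact (ZMod.val_eq_zero _).mp this
    rw [Tw.one_def]
    ext <;> simp [ha, hb]
  have hθsurj : Function.Surjective θ := by
    rw [← MonoidHom.range_eq_top, eq_top_iff, ← hgen, Subgroup.closure_le]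
    intro g hg
    rcases hg with h | h
    · exact ⟨⟨1, 0⟩, by rw [h]; exact hθx⟩
    · simp only [Set.mem_singleton_iff] at h
      exact ⟨⟨0, 1⟩, by rw [h]; exact hθy⟩
  let e : Tw m s ≃* G := MulEquiv.ofBijective θ ⟨hθinj, hθsurj⟩
  have heapp : ∀ z, e z = θ z := fun z => rfl
  let ρ : Tw m s →* Tw n s := Tw.red hnm
  have hρapp : ∀ g : Tw m s,
      ρ g = ⟨ZMod.castHom hnm (ZMod n) g.a, ZMod.castHom hnm (ZMod n) g.b⟩ := fun g => rfl
  let π : G →* Tw n s := ρ.comp e.symm.toMonoidHom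
  have hπapp : ∀ g, π g = ρ (e.symm g) := fun g => rfl
  have hesx : e.symm x = ⟨1, 0⟩ := by
    rw [MulEquiv.symm_apply_eq, heapp, hθx]
  have hesy : e.symm y = ⟨0, 1⟩ := by
    rw [MulEquiv.symm_apply_eq, heapp, hθy]
  have c1 : ZMod.castHom hnm (ZMod n) (1 : ZMod m) = 1 := map_one _
  have c0 : ZMod.castHom hnm (ZMod n) (0 : ZMod m) = 0 := map_zero _
  have hπx : π x = ⟨1, 0⟩ := by
    rw [hπapp, hesx, hρapp, c1, c0]
  have hπy : π y = ⟨0, 1⟩ := by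
    rw [hπapp, hesy, hρapp, c1, c0]
  -- powers of the generators in Tw n s
  have hxpow : ∀ j : ℕ, (⟨1, 0⟩ : Tw n s) ^ j = ⟨(j : ZMod n), 0⟩ := by
    intro j
    rw [Tw.xpow]
    congr 1
    simp
  have hypow : ∀ j : ℕ, (⟨0, 1⟩ : Tw n s) ^ j = ⟨0, (j : ZMod n)⟩ := by
    intro j
    rw [Tw.ypow]
    congr 1
    simp
  have hxn1 : (⟨1, 0⟩ : Tw n s) ^ n = 1 := by
    rw [hxpow, Tw.one_def, ZMod.natCast_self]
  have hyn1 : (⟨0, 1⟩ : Tw n s) ^ n = 1 := by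
    rw [hypow, Tw.one_def, ZMod.natCast_self]
  have hπsurj : Function.Surjective π := by
    have hρsurj : Function.Surjective ρ := by
      intro g
      refine ⟨⟨(g.a.val : ZMod m), (g.b.val : ZMod m)⟩, ?_⟩
      rw [hρapp]
      have hcast : ∀ w : ZMod n, ZMod.castHom hnm (ZMod n) ((w.val : ZMod m)) = w := by
        intro w
        rw [map_natCast, ZMod.natCast_val, ZMod.cast_id]
      ext <;> simp [hcast]
    exact hρsurj.comp e.symm.surjective
  -- coordinates of kernel elements
  have hcoord : ∀ g : G, π g = 1 → ∃ c d : ℕ, g = (x ^ n) ^ c * (y ^ n) ^ d := by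
    intro g hg
    set z := e.symm g with hzdef
    have hgz : g = θ z := by rw [hzdef, ← heapp, e.apply_symm_apply]
    rw [hπapp, ← hzdef, hρapp, Tw.one_def] at hg
    have h1 : ZMod.castHom hnm (ZMod n) z.a = 0 := congrArg Tw.a hg
    have h2 : ZMod.castHom hnm (ZMod n) z.b = 0 := congrArg Tw.b hg
    have hv1 : (n : ℕ) ∣ z.a.val := by
      rw [ZMod.castHom_apply, ← ZMod.natCast_val] at h1
      exact (ZMod.natCast_eq_zero_iff _ _).mp h1
    have hv2 : (n : ℕ) ∣ z.b.val := by
      rw [ZMod.castHom_apply, ← ZMod.natCast_val] at h2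
      exact (ZMod.natCast_eq_zero_iff _ _).mp h2
    obtain ⟨c, hc⟩ := hv1
    obtain ⟨d, hd⟩ := hv2
    refine ⟨c, d, ?_⟩
    rw [hgz, hθapp, hc, hd, pow_mul, pow_mul]
  have hπxn : π (x ^ n) = 1 := by rw [map_pow, hπx]; exact hxn1
  have hπyn : π (y ^ n) = 1 := by rw [map_pow, hπy]; exact hyn1
  have hker : π.ker = Subgroup.closure ({x ^ n, y ^ n} : Set G) := by
    apply le_antisymm
    · intro g hg
      obtain ⟨c, d, hcd⟩ := hcoord g hg
      rw [hcd]
      exact Subgroup.mul_mem _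
        (Subgroup.pow_mem _ (Subgroup.subset_closure (by simp)) _)
        (Subgroup.pow_mem _ (Subgroup.subset_closure (by simp)) _)
    · rw [Subgroup.closure_le]
      intro g hg
      rcases hg with h | h
      · rw [h]; exact hπxn
      · simp only [Set.mem_singleton_iff] at h
        rw [h]; exact hπyn
  -- order of x^n and y^n is p
  have hxnord : orderOf (x ^ n) = p := by
    have h1 : (x ^ n) ^ p = 1 := by
      rw [← pow_mul, mul_comm, ← hmn, ← hx, pow_orderOf_eq_one]
    have h2 := orderOf_dvd_of_pow_eq_one h1
    rcases (Nat.Prime.eq_one_or_self_of_dvd hp _ h2) with h | h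
    · exfalso
      have h3 : x ^ n = 1 := by
        have := pow_orderOf_eq_one (x ^ n)
        rwa [h, pow_one] at this
      have := orderOf_dvd_of_pow_eq_one h3
      rw [hx] at this
      have := Nat.le_of_dvd hn0 this
      omega
    · exact h
  have hynord : orderOf (y ^ n) = p := by
    have h1 : (y ^ n) ^ p = 1 := by
      rw [← pow_mul, mul_comm, ← hmn, ← hy, pow_orderOf_eq_one]
    have h2 := orderOf_dvd_of_pow_eq_one h1
    rcases (Nat.Prime.eq_one_or_self_of_dvd hp _ h2) with h | h
    · exfalso
      have h3 : y ^ n = 1 := by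
        have := pow_orderOf_eq_one (y ^ n)
        rwa [h, pow_one] at this
      have := orderOf_dvd_of_pow_eq_one h3
      rw [hy] at this
      have := Nat.le_of_dvd hn0 this
      omega
    · exact h
  -- x^n and y^n commute
  have hcomm : Commute (x ^ n) (y ^ n) := by
    have h1 : y ^ n * x ^ n = x ^ (s ^ n * n) * y ^ n := hyx n n
    have h2 : x ^ (s ^ n * n) = x ^ n := by
      rw [pow_eq_pow_iff_modEq, hx, hmn]
      have := key2.mul_right' n
      simpa using this
    rw [h2] at h1
    exact (Commute.eq h1).symm
  -- the isomorphism N ≃ C_p × C_p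
  have humod : ∀ j : ℕ, (x ^ n) ^ (j % p) = (x ^ n) ^ j := by
    intro j; rw [← hxnord, pow_mod_orderOf]
  have hvmod : ∀ j : ℕ, (y ^ n) ^ (j % p) = (y ^ n) ^ j := by
    intro j; rw [← hynord, pow_mod_orderOf]
  let ψ : Multiplicative (ZMod p × ZMod p) →* G := MonoidHom.mk'
    (fun z => (x ^ n) ^ (Multiplicative.toAdd z).1.val
      * (y ^ n) ^ (Multiplicative.toAdd z).2.val) (by
      intro z w
      show (x ^ n) ^ ((Multiplicative.toAdd z).1 + (Multiplicative.toAdd w).1).val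
          * (y ^ n) ^ ((Multiplicative.toAdd z).2 + (Multiplicative.toAdd w).2).val
        = ((x ^ n) ^ (Multiplicative.toAdd z).1.val * (y ^ n) ^ (Multiplicative.toAdd z).2.val)
          * ((x ^ n) ^ (Multiplicative.toAdd w).1.val * (y ^ n) ^ (Multiplicative.toAdd w).2.val)
      rw [ZMod.val_add, ZMod.val_add, humod, hvmod, pow_add, pow_add]
      calc (x ^ n) ^ (Multiplicative.toAdd z).1.val * (x ^ n) ^ (Multiplicative.toAdd w).1.val
            * ((y ^ n) ^ (Multiplicative.toAdd z).2.val * (y ^ n) ^ (Multiplicative.toAdd w).2.val)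
          = (x ^ n) ^ (Multiplicative.toAdd z).1.val
            * (((x ^ n) ^ (Multiplicative.toAdd w).1.val * (y ^ n) ^ (Multiplicative.toAdd z).2.val)
              * (y ^ n) ^ (Multiplicative.toAdd w).2.val) := by group
      _ = (x ^ n) ^ (Multiplicative.toAdd z).1.val
            * (((y ^ n) ^ (Multiplicative.toAdd z).2.val * (x ^ n) ^ (Multiplicative.toAdd w).1.val)
              * (y ^ n) ^ (Multiplicative.toAdd w).2.val) := by
          rw [(hcomm.pow_pow _ _).eq]
      _ = _ := by group)
  have hψapp : ∀ z, ψ z = (x ^ n) ^ (Multiplicative.toAdd z).1.val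
      * (y ^ n) ^ (Multiplicative.toAdd z).2.val := fun z => rfl
  have hψinj : Function.Injective ψ := by
    rw [injective_iff_map_eq_one]
    intro z hz
    rw [hψapp, ← pow_mul, ← pow_mul] at hz
    obtain ⟨h1, h2⟩ := hsep _ _ hz
    have hz1 : (Multiplicative.toAdd z).1 = 0 := by
      have d1 := orderOf_dvd_of_pow_eq_one h1
      rw [hx, hmn] at d1
      obtain ⟨c, hc⟩ := d1
      have hc' : n * (Multiplicative.toAdd z).1.val = n * (p * c) := by rw [hc]; ring
      have hpc : (Multiplicative.toAdd z).1.val = p * c := Nat.eq_of_mul_eq_mul_left hn0 hc'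
      have := ZMod.val_lt (Multiplicative.toAdd z).1
      have : (Multiplicative.toAdd z).1.val = 0 :=
        Nat.eq_zero_of_dvd_of_lt ⟨c, hpc⟩ (ZMod.val_lt _)
      exact (ZMod.val_eq_zero _).mp this
    have hz2 : (Multiplicative.toAdd z).2 = 0 := by
      have d2 := orderOf_dvd_of_pow_eq_one h2
      rw [hy, hmn] at d2
      obtain ⟨c, hc⟩ := d2
      have hc' : n * (Multiplicative.toAdd z).2.val = n * (p * c) := by rw [hc]; ring
      have hpc : (Multiplicative.toAdd z).2.val = p * c := Nat.eq_of_mul_eq_mul_left hn0 hc'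
      have : (Multiplicative.toAdd z).2.val = 0 :=
        Nat.eq_zero_of_dvd_of_lt ⟨c, hpc⟩ (ZMod.val_lt _)
      exact (ZMod.val_eq_zero _).mp this
    apply Multiplicative.toAdd.injective
    rw [toAdd_one]
    exact Prod.ext hz1 hz2
  have hψmem : ∀ z, ψ z ∈ Subgroup.closure ({x ^ n, y ^ n} : Set G) := by
    intro z
    rw [hψapp]
    exact Subgroup.mul_mem _
      (Subgroup.pow_mem _ (Subgroup.subset_closure (by simp)) _)
      (Subgroup.pow_mem _ (Subgroup.subset_closure (by simp)) _)
  let ψ' : Multiplicative (ZMod p × ZMod p) →* Subgroup.closure ({x ^ n, y ^ n} : Set G) :=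
    ψ.codRestrict _ hψmem
  have hψ'inj : Function.Injective ψ' := fun z w h => hψinj (congrArg Subtype.val h)
  have hψ'surj : Function.Surjective ψ' := by
    rintro ⟨g, hg⟩
    rw [← hker] at hg
    obtain ⟨c, d, hcd⟩ := hcoord g (MonoidHom.mem_ker.mp hg)
    refine ⟨Multiplicative.ofAdd ((c : ZMod p), (d : ZMod p)), ?_⟩
    apply Subtype.ext
    show ψ _ = g
    rw [hψapp]
    show (x ^ n) ^ ((c : ZMod p)).val * (y ^ n) ^ ((d : ZMod p)).val = g
    rw [ZMod.val_natCast, ZMod.val_natCast, humod, hvmod, hcd]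
  let eq2 := MulEquiv.ofBijective ψ' ⟨hψ'inj, hψ'surj⟩
  -- order of π x and π y
  have hordx : orderOf (π x) = n := by
    rw [hπx]
    have h2 : ∀ j : ℕ, (⟨1, 0⟩ : Tw n s) ^ j = 1 → n ∣ j := by
      intro j hj
      rw [hxpow, Tw.one_def] at hj
      have := congrArg Tw.a hj
      exact (ZMod.natCast_eq_zero_iff _ _).mp this
    exact Nat.dvd_antisymm (orderOf_dvd_of_pow_eq_one hxn1) (h2 _ (pow_orderOf_eq_one _))
  have hordy : orderOf (π y) = n := by
    rw [hπy]
    have h2 : ∀ j : ℕ, (⟨0, 1⟩ : Tw n s) ^ j = 1 → n ∣ j := by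
      intro j hj
      rw [hypow, Tw.one_def] at hj
      have := congrArg Tw.b hj
      exact (ZMod.natCast_eq_zero_iff _ _).mp this
    exact Nat.dvd_antisymm (orderOf_dvd_of_pow_eq_one hyn1) (h2 _ (pow_orderOf_eq_one _))
  -- closure of images is top
  have hclos : Subgroup.closure ({π x, π y} : Set (Tw n s)) = ⊤ := by
    rw [← Set.image_pair, ← MonoidHom.map_closure, hgen]
    exact Subgroup.map_top_of_surjective π hπsurj
  -- trivial intersection of zpowers in the quotient model
  have hinf : Subgroup.zpowers (π x) ⊓ Subgroup.zpowers (π y) = ⊥ := by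
    rw [hπx, hπy, eq_bot_iff]
    intro g hg
    obtain ⟨hg1, hg2⟩ := Subgroup.mem_inf.mp hg
    obtain ⟨j, hj⟩ := Subgroup.mem_zpowers_iff.mp hg1
    obtain ⟨l, hl⟩ := Subgroup.mem_zpowers_iff.mp hg2
    rw [Tw.xzpow] at hj
    rw [Tw.yzpow] at hl
    have hb : g.b = 0 := (congrArg Tw.b hj).symm
    have ha : g.a = 0 := (congrArg Tw.a hl).symm
    rw [Subgroup.mem_bot, Tw.one_def]
    exact Tw.ext ha hb
  have hrelπ : π y * π x * (π y)⁻¹ = π x ^ s := by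
    rw [← map_inv, ← map_mul, ← map_mul, hrel, map_pow]
  exact ⟨hker ▸ π.normal_ker, ⟨eq2.symm⟩, Tw n s, inferInstance, π, hπsurj, hker,
    hordx, hordy, hclos, hinf, hrelπ⟩
end

section
/- Let m be a positive integer whose largest prime divisor is p, and let s be an integer with s^m ≡ 1 (mod m) and gcd(s, m) = 1. Then s^{m/p} ≡ 1 (mod m). -/
/-- If all prime factors of `n` are less than the prime `p`, then `p ∤ φ n`. -/
lemma aux_not_dvd_totient_s5 (p n : ℕ) (hp : p.Prime) (hn : n ≠ 0)
    (h : ∀ q : ℕ, q.Prime → q ∣ n → q < p) : ¬ p ∣ n.totient := by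
  rw [Nat.totient_eq_prod_factorization hn]
  refine hp.prime.not_dvd_finset_prod fun q hq => ?_
  have hq' : q.Prime := Nat.prime_of_mem_primeFactors (by simpa using hq)
  have hqn : q ∣ n := Nat.dvd_of_mem_primeFactors (by simpa using hq)
  have hqp : q < p := h q hq' hqn
  intro hdvd
  rcases (Nat.Prime.dvd_mul hp).1 hdvd with h1 | h2
  · have := hp.dvd_of_dvd_pow h1
    have := Nat.le_of_dvd hq'.pos this
    omega
  · have h2pos : 0 < q - 1 := by have := hq'.two_le; omega
    have := Nat.le_of_dvd h2pos h2
    omega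

/-- If `p` is the largest prime divisor of `m`, `gcd(s, m) = 1` and
`s^m ≡ 1 (mod m)`, then `s^{m/p} ≡ 1 (mod m)`. -/
theorem pow_div_largest_prime_cong_one (m p : ℕ) (s : ℤ) (hm : 0 < m)
    (hp : p.Prime) (hpm : p ∣ m) (hmax : ∀ q : ℕ, q.Prime → q ∣ m → q ≤ p)
    (hcop : Int.gcd s (m : ℤ) = 1) (hpow : s ^ m ≡ 1 [ZMOD (m : ℕ)]) :
    s ^ (m / p) ≡ 1 [ZMOD (m : ℕ)] := by
  haveI : NeZero m := ⟨hm.ne'⟩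
  -- work in ZMod m
  rw [← ZMod.intCast_eq_intCast_iff] at hpow ⊢
  push_cast at hpow ⊢
  set x : ZMod m := (s : ZMod m) with hx
  -- x is a unit
  have hmne : m ≠ 0 := hm.ne'
  have hux : IsUnit x := by
    rcases Nat.eq_zero_or_pos (m - 1) with h | h
    · have hm1 : m = 1 := by omega
      subst hm1
      exact IsUnit.of_mul_eq_one (a := x) x (Subsingleton.elim _ _)
    · refine IsUnit.of_mul_eq_one (a := x) (x ^ (m - 1)) ?_
      rw [← pow_succ']
      have : m - 1 + 1 = m := by omega
      rw [this, hpow]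
  set d := orderOf x with hd
  have hdm : d ∣ m := orderOf_dvd_of_pow_eq_one hpow
  have hdphi : d ∣ Nat.totient m := by
    obtain ⟨u, hu⟩ := hux
    have h1 : orderOf u = d := by rw [hd, ← hu, orderOf_units]
    have h2 : orderOf u ∣ Fintype.card (ZMod m)ˣ := orderOf_dvd_card
    rwa [h1, ZMod.card_units_eq_totient] at h2
  have hdne : d ≠ 0 := by
    intro h0
    rw [h0] at hdm
    exact hmne (Nat.eq_zero_of_zero_dvd hdm)
  -- key arithmetic: d ∣ m / p
  have hkey : d ∣ m / p := by
    set e := m.factorization p with he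
    have he1 : 1 ≤ e := (Nat.Prime.factorization_pos_of_dvd hp hmne hpm)
    set n := m / p ^ e with hn
    have hmn : p ^ e * n = m := Nat.ordProj_mul_ordCompl_eq_self m p
    have hpn : ¬ p ∣ n := Nat.not_dvd_ordCompl hp hmne
    have hnne : n ≠ 0 := by
      intro h0; rw [h0, mul_zero] at hmn; exact hmne hmn.symm
    -- totient m = p^(e-1) * ((p-1) * totient n)
    have hcopr : Nat.Coprime (p ^ e) n := Nat.Coprime.pow_left e
      ((Nat.Prime.coprime_iff_not_dvd hp).2 hpn)
    have htot : Nat.totient m = p ^ (e - 1) * ((p - 1) * Nat.totient n) := by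
      rw [← hmn, Nat.totient_mul hcopr, Nat.totient_prime_pow hp he1, mul_assoc]
    have hpc : ¬ p ∣ (p - 1) * Nat.totient n := by
      rw [Nat.Prime.dvd_mul hp]
      push_neg
      constructor
      · intro hcon
        have hp2 := hp.two_le
        have := Nat.le_of_dvd (by omega) hcon
        omega
      · refine aux_not_dvd_totient_s5 p n hp hnne fun q hq hqn => ?_
        have hqm : q ∣ m := hqn.trans (Dvd.intro_left _ hmn)
        have hle := hmax q hq hqm
        rcases lt_or_eq_of_le hle with h | h
        · exact h
        · exfalso; exact hpn (h ▸ hqn)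
    -- split d = p^a * d'
    set a := d.factorization p with ha
    set d' := d / p ^ a with hd'
    have hdd : p ^ a * d' = d := Nat.ordProj_mul_ordCompl_eq_self d p
    have hpd' : ¬ p ∣ d' := Nat.not_dvd_ordCompl hp hdne
    -- a ≤ e - 1
    have hpa : p ^ a ∣ p ^ (e - 1) := by
      have h1 : p ^ a ∣ Nat.totient m := (Dvd.intro _ hdd).trans hdphi
      rw [htot] at h1
      have hcop2 : Nat.Coprime (p ^ a) ((p - 1) * Nat.totient n) :=
        Nat.Coprime.pow_left a ((Nat.Prime.coprime_iff_not_dvd hp).2 hpc)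
      exact hcop2.dvd_of_dvd_mul_right h1
    -- d' ∣ n
    have hd'n : d' ∣ n := by
      have h1 : d' ∣ m := (Dvd.intro_left _ hdd).trans hdm
      rw [← hmn] at h1
      have hcop2 : Nat.Coprime d' (p ^ e) := Nat.Coprime.pow_right e
        ((Nat.Prime.coprime_iff_not_dvd hp).2 hpd').symm
      exact hcop2.dvd_of_dvd_mul_left h1
    have hmp : m / p = p ^ (e - 1) * n := by
      have h1 : m = p * (p ^ (e - 1) * n) := by
        rw [← mul_assoc, ← pow_succ']
        have : e - 1 + 1 = e := by omega
        rw [this, hmn]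
      rw [h1, Nat.mul_div_cancel_left _ hp.pos]
    rw [hmp, ← hdd]
    exact mul_dvd_mul hpa hd'n
  exact orderOf_dvd_iff_pow_eq_one.1 hkey
end

section
/- Let G = ⟨x, y⟩ ≅ C_m ⋉_φ C_{mn} with ord(x) = m, ord(y) = mn, ⟨x⟩ ∩ ⟨y⟩ = {1}, and xyx⁻¹ = y^s. Then the sequence S = x^{[m−1]} · y^{[mn−1]} (the element x repeated m−1 times together with y repeated mn−1 times) is product-one free, i.e. no nonempty subsequence of S has a product (in some order) equal to the identity. Consequently d(G) ≥ m + mn − 2. -/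
/-- A sequence (multiset) over `G` is product-one if its terms can be ordered so
that their product equals `1`. -/
def IsProductOne {G : Type*} [Group G] (S : Multiset G) : Prop :=
  ∃ l : List G, (l : Multiset G) = S ∧ l.prod = 1

/-- A sequence is product-one free if it has no nonempty product-one subsequence. -/
def ProductOneFree {G : Type*} [Group G] (S : Multiset G) : Prop :=
  ∀ T ≤ S, T ≠ 0 → ¬ IsProductOne T

private lemma aux_prod {G : Type*} [Group G] [DecidableEq G] (x y : G) (s : ℕ)
    (hrel : x * y * x⁻¹ = y ^ s) (hxy : x ≠ y) :
    ∀ l : List G, (∀ g ∈ l, g = x ∨ g = y) → ∃ c : ℤ, l.prod = y ^ c * x ^ (l.count x) := by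
  intro l
  induction l with
  | nil => intro _; exact ⟨0, by simp⟩
  | cons g t ih =>
    intro h
    obtain ⟨c, hc⟩ := ih (fun g hg => h g (List.mem_cons_of_mem _ hg))
    rcases h g List.mem_cons_self with hg | hg
    · refine ⟨s * c, ?_⟩
      rw [hg, List.prod_cons, hc, List.count_cons_self]
      have key : x * y ^ c * x⁻¹ = y ^ ((s : ℤ) * c) := by
        rw [zpow_mul, zpow_natCast, ← hrel, conj_zpow]
      calc x * (y ^ c * x ^ (t.count x))
          = (x * y ^ c * x⁻¹) * x ^ (t.count x + 1) := by
            rw [pow_succ]; group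
        _ = y ^ ((s : ℤ) * c) * x ^ (t.count x + 1) := by rw [key]
    · refine ⟨c + 1, ?_⟩
      rw [hg, List.prod_cons, hc, List.count_cons_of_ne (Ne.symm hxy)]
      rw [zpow_add_one]; group

/-- For `G = ⟨x, y⟩ ≅ C_m ⋉_φ C_{mn}`, the sequence `x^{[m−1]} · y^{[mn−1]}` is
product-one free; consequently `d(G) ≥ m + mn − 2`. -/
theorem extremal_sequence_product_one_free {G : Type*} [Group G] (m n s : ℕ)
    (hm : 0 < m) (hn : 0 < n) (x y : G)
    (hx : orderOf x = m) (hy : orderOf y = m * n)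
    (hgen : Subgroup.closure ({x, y} : Set G) = ⊤)
    (hint : Subgroup.zpowers x ⊓ Subgroup.zpowers y = ⊥)
    (hrel : x * y * x⁻¹ = y ^ s) (hs : s ^ m ≡ 1 [MOD m * n]) :
    ProductOneFree (Multiset.replicate (m - 1) x + Multiset.replicate (m * n - 1) y) ∧
    ∀ d : ℕ, IsGreatest {k : ℕ | ∃ S : Multiset G, Multiset.card S = k ∧ ProductOneFree S} d →
      m + m * n - 2 ≤ d := by
  classical
  have hmn : 0 < m * n := Nat.mul_pos hm hn
  set S : Multiset G := Multiset.replicate (m - 1) x + Multiset.replicate (m * n - 1) y with hS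
  have hfree : ProductOneFree S := by
    by_cases hxy : x = y
    · have hx1 : x = 1 := by
        have hmem : x ∈ Subgroup.zpowers x ⊓ Subgroup.zpowers y :=
          ⟨Subgroup.mem_zpowers x, hxy ▸ Subgroup.mem_zpowers x⟩
        rwa [hint, Subgroup.mem_bot] at hmem
      have hm1 : m = 1 := by rw [← hx, hx1, orderOf_one]
      have hmn1 : m * n = 1 := by rw [← hy, ← hxy, hx1, orderOf_one]
      intro T hT hT0 _
      apply hT0
      have hn1 : n = 1 := by rw [hm1, one_mul] at hmn1; exact hmn1
      have hS0 : S = 0 := by simp [hS, hm1, hn1]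
      simpa [hS0, Multiset.le_zero] using hT
    · intro T hT hT0 hP
      obtain ⟨l, hl, hlp⟩ := hP
      have hmem : ∀ g ∈ l, g = x ∨ g = y := by
        intro g hg
        have hgS : g ∈ S := Multiset.mem_of_le hT (by rw [← hl]; exact hg)
        simp only [hS, Multiset.mem_add, Multiset.mem_replicate] at hgS
        tauto
      have hcx : l.count x ≤ m - 1 := by
        have h1 := Multiset.count_le_of_le x hT
        rw [← hl] at h1
        simpa [hS, Multiset.count_replicate, hxy, Ne.symm hxy] using h1
      have hcy : l.count y ≤ m * n - 1 := by
        have h1 := Multiset.count_le_of_le y hT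
        rw [← hl] at h1
        simpa [hS, Multiset.count_replicate, hxy, Ne.symm hxy] using h1
      obtain ⟨c, hc⟩ := aux_prod x y s hrel hxy l hmem
      rw [hlp] at hc
      have hxa1 : x ^ (l.count x) = 1 := by
        have hxa : x ^ (l.count x) = y ^ (-c) := by
          rw [zpow_neg]; exact eq_inv_of_mul_eq_one_right hc.symm
        have hmem2 : x ^ (l.count x) ∈ Subgroup.zpowers x ⊓ Subgroup.zpowers y :=
          ⟨⟨(l.count x : ℤ), by simp⟩, ⟨-c, hxa.symm⟩⟩
        rwa [hint, Subgroup.mem_bot] at hmem2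
      have hdvd : m ∣ l.count x := hx ▸ orderOf_dvd_of_pow_eq_one hxa1
      have ha0 : l.count x = 0 := by
        rcases Nat.eq_zero_or_pos (l.count x) with h | h
        · exact h
        · have := Nat.le_of_dvd h hdvd; omega
      have hally : ∀ g ∈ l, g = y := by
        intro g hg
        rcases hmem g hg with rfl | rfl
        · exact absurd (List.count_pos_iff.mpr hg) (by omega)
        · rfl
      have hrep : l = List.replicate l.length y := List.eq_replicate_of_mem hally
      have hy1 : y ^ l.length = 1 := by
        rw [← List.prod_replicate, ← hrep, hlp]
      have hdvd2 : m * n ∣ l.length := hy ▸ orderOf_dvd_of_pow_eq_one hy1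
      have hlen : l.count y = l.length := by
        conv_lhs => rw [hrep]
        simp
      have hpos : 0 < l.length := by
        rcases Nat.eq_zero_or_pos l.length with h | h
        · exfalso; apply hT0
          rw [← hl, List.length_eq_zero_iff.mp h]; rfl
        · exact h
      have := Nat.le_of_dvd hpos hdvd2
      omega
  refine ⟨hfree, ?_⟩
  intro d hd
  apply hd.2
  refine ⟨S, ?_, hfree⟩
  simp only [hS, Multiset.card_add, Multiset.card_replicate]
  omega
end

section
/- Let p be a prime and k a positive integer. Then the generalized Davenport constant satisfies D_k(C_p × C_p) = kp + p − 1; that is, every sequence over C_p × C_p of length at least kp + p − 1 contains k nonempty pairwise disjoint zero-sum subsequences, and kp + p − 1 is minimal with this property. -/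
open Finset MvPolynomial in
lemma cw_sol (p : ℕ) (hp : p.Prime) (m n : ℕ) (a : Fin m → Fin n → ZMod p)
    (h : m * (p - 1) < n) :
    ∃ A : Finset (Fin n), A.Nonempty ∧ ∀ j, ∑ i ∈ A, a j i = 0 := by
  haveI : Fact p.Prime := ⟨hp⟩
  have hp1 : 0 < p - 1 := by have := hp.two_le; omega
  set f : Fin m → MvPolynomial (Fin n) (ZMod p) :=
    fun j => ∑ i, C (a j i) * X i ^ (p - 1) with hf
  have hdeg : ∀ j, (f j).totalDegree ≤ p - 1 := by
    intro j
    refine (totalDegree_finset_sum _ _).trans ?_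
    refine Finset.sup_le fun i _ => ?_
    calc (C (a j i) * X i ^ (p-1)).totalDegree
        ≤ (C (a j i)).totalDegree + (X i ^ (p-1) : MvPolynomial (Fin n) (ZMod p)).totalDegree :=
          totalDegree_mul _ _
      _ ≤ 0 + (p-1) := by
          gcongr
          · exact le_of_eq (totalDegree_C _)
          · exact (totalDegree_pow _ _).trans (by simp)
      _ = p - 1 := by omega
  have hsum : (∑ j, (f j).totalDegree) < Fintype.card (Fin n) := by
    rw [Fintype.card_fin]
    calc ∑ j, (f j).totalDegree ≤ ∑ _j : Fin m, (p-1) := Finset.sum_le_sum fun j _ => hdeg j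
      _ = m * (p-1) := by simp [mul_comm]
      _ < n := h
  have hdvd := char_dvd_card_solutions_of_sum_lt (p := p) (f := f) (s := Finset.univ)
    (by simpa using hsum)
  -- zero is a solution
  have h0 : ∀ j ∈ Finset.univ, eval (0 : Fin n → ZMod p) (f j) = 0 := by
    intro j _
    simp [hf, zero_pow hp1.ne']
  -- get a nonzero solution
  have hdvd' : p ∣ Fintype.card { x : Fin n → ZMod p // ∀ i ∈ Finset.univ, eval x (f i) = 0 } := by
    convert hdvd using 2
  have hcard : 1 < Fintype.card { x : Fin n → ZMod p // ∀ i ∈ Finset.univ, eval x (f i) = 0 } :=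
    lt_of_lt_of_le hp.one_lt (Nat.le_of_dvd (Fintype.card_pos_iff.2 ⟨⟨0, h0⟩⟩) hdvd')
  obtain ⟨u, v, huv⟩ := Fintype.one_lt_card_iff.mp hcard
  have : ∃ x : Fin n → ZMod p, (∀ j, eval x (f j) = 0) ∧ x ≠ 0 := by
    by_cases hu : u.1 = 0
    · by_cases hv : v.1 = 0
      · exact absurd (Subtype.ext (hu.trans hv.symm)) huv
      · exact ⟨v.1, fun j => v.2 j (Finset.mem_univ j), hv⟩
    · exact ⟨u.1, fun j => u.2 j (Finset.mem_univ j), hu⟩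
  obtain ⟨x, hx, hx0⟩ := this
  refine ⟨Finset.univ.filter (fun i => x i ≠ 0), ?_, ?_⟩
  · obtain ⟨i, hi⟩ := Function.ne_iff.mp hx0
    refine ⟨i, by simp; exact fun h => hi (by simp [h])⟩
  · intro j
    have := hx j
    rw [hf] at this
    simp only [map_sum, map_mul, map_pow, eval_C, eval_X] at this
    have h1 : ∑ i ∈ Finset.univ.filter (fun i => x i ≠ 0), a j i * x i ^ (p-1)
        = ∑ i ∈ Finset.univ.filter (fun i => x i ≠ 0), a j i := by
      refine Finset.sum_congr rfl fun i hi => ?_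
      rw [Finset.mem_filter] at hi
      have : x i ^ (p - 1) = 1 := by
        have := ZMod.pow_card_sub_one_eq_one hi.2
        simpa using this
      rw [this, mul_one]
    have h2 : ∑ i ∈ Finset.univ.filter (fun i => ¬ x i ≠ 0), a j i * x i ^ (p-1) = 0 := by
      refine Finset.sum_eq_zero fun i hi => ?_
      rw [Finset.mem_filter] at hi
      push_neg at hi
      rw [hi.2, zero_pow hp1.ne', mul_zero]
    have hsplit : ∑ i : Fin n, a j i * x i ^ (p-1)
        = ∑ i ∈ Finset.univ.filter (fun i => x i ≠ 0), a j i := by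
      rw [← Finset.sum_filter_add_sum_filter_not Finset.univ (fun i => x i ≠ 0)
        (fun i => a j i * x i ^ (p-1)), h1, h2, add_zero]
    rw [← hsplit]
    exact this


lemma finset_multiset_le {α : Type*} [AddCommMonoid α] (S : Multiset α) (A : Finset (Fin S.toList.length)) :
    (A.val.map S.toList.get) ≤ S ∧ Multiset.card (A.val.map S.toList.get) = A.card ∧
      (A.val.map S.toList.get).sum = ∑ i ∈ A, S.toList.get i := by
  refine ⟨?_, by simp, rfl⟩
  calc (A.val.map S.toList.get) ≤ ((Finset.univ : Finset (Fin S.toList.length)).val.map S.toList.get) := by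
        refine Multiset.map_le_map ?_
        exact Finset.val_le_iff_val_subset.mpr (fun x hx => Finset.mem_univ x)
    _ = S := by
        rw [Fin.univ_def]
        show ((List.finRange S.toList.length : Multiset _).map S.toList.get) = S
        rw [show ((List.finRange S.toList.length : Multiset _).map S.toList.get)
              = ((List.finRange S.toList.length).map S.toList.get : List α) from rfl,
            List.map_get_finRange, Multiset.coe_toList]

lemma lemA (p : ℕ) (hp : p.Prime) (S : Multiset (ZMod p × ZMod p))
    (h : 2 * p - 1 ≤ Multiset.card S) :
    ∃ T : Multiset (ZMod p × ZMod p), T ≤ S ∧ T ≠ 0 ∧ T.sum = 0 := by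
  have h2 : 2 * (p - 1) < S.toList.length := by
    rw [Multiset.length_toList]; have := hp.two_le; omega
  obtain ⟨A, hA, hz⟩ := cw_sol p hp 2 S.toList.length
    ![fun i => (S.toList.get i).1, fun i => (S.toList.get i).2] h2
  obtain ⟨hle, hcard, hsum⟩ := finset_multiset_le S A
  refine ⟨A.val.map S.toList.get, hle, ?_, ?_⟩
  · intro h0
    have : A.card = 0 := by rw [← hcard, h0]; simp
    exact hA.ne_empty (Finset.card_eq_zero.mp this)
  · rw [hsum]
    have h1 := hz 0
    have h2 := hz 1
    simp only [Matrix.cons_val_zero, Matrix.cons_val_one, Matrix.head_cons] at h1 h2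
    ext
    · rw [Prod.fst_sum]; simpa using h1
    · rw [Prod.snd_sum]; simpa using h2

lemma lemB0 (p : ℕ) (hp : p.Prime) (S : Multiset (ZMod p × ZMod p))
    (h : 3 * p - 2 ≤ Multiset.card S) :
    ∃ T : Multiset (ZMod p × ZMod p), T ≤ S ∧ T ≠ 0 ∧ T.sum = 0 ∧ p ∣ Multiset.card T := by
  have h2 : 3 * (p - 1) < S.toList.length := by
    rw [Multiset.length_toList]; have := hp.two_le; omega
  obtain ⟨A, hA, hz⟩ := cw_sol p hp 3 S.toList.length
    ![fun i => (S.toList.get i).1, fun i => (S.toList.get i).2, fun _ => 1] h2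
  obtain ⟨hle, hcard, hsum⟩ := finset_multiset_le S A
  refine ⟨A.val.map S.toList.get, hle, ?_, ?_, ?_⟩
  · intro h0
    have : A.card = 0 := by rw [← hcard, h0]; simp
    exact hA.ne_empty (Finset.card_eq_zero.mp this)
  · rw [hsum]
    have h1 := hz 0
    have h2 := hz 1
    simp only [Matrix.cons_val_zero, Matrix.cons_val_one, Matrix.head_cons] at h1 h2
    ext
    · rw [Prod.fst_sum]; simpa using h1
    · rw [Prod.snd_sum]; simpa using h2
  · have h3 := hz 2
    have : ((A.card : ℕ) : ZMod p) = 0 := by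
      rw [← h3]; simp
    rw [hcard]
    exact (ZMod.natCast_eq_zero_iff _ _).mp this

lemma lemB (p : ℕ) (hp : p.Prime) (S : Multiset (ZMod p × ZMod p))
    (h : Multiset.card S = 3 * p - 2) :
    ∃ T : Multiset (ZMod p × ZMod p), T ≤ S ∧ T ≠ 0 ∧ T.sum = 0 ∧ Multiset.card T ≤ p := by
  obtain ⟨T, hTS, hT0, hTsum, hTdvd⟩ := lemB0 p hp S h.ge
  have hp2 := hp.two_le
  have hcpos : 0 < Multiset.card T := Multiset.card_pos.mpr hT0
  have hcle : Multiset.card T ≤ 3 * p - 2 := h ▸ Multiset.card_le_card hTS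
  -- card T = p or 2p
  rcases hTdvd with ⟨c, hc⟩
  have hc12 : c = 1 ∨ c = 2 := by
    rcases Nat.lt_or_ge c 3 with h3 | h3
    · interval_cases c
      · omega
      · left; rfl
      · right; rfl
    · exfalso; have : p * 3 ≤ p * c := Nat.mul_le_mul_left p h3; omega
  rcases hc12 with rfl | rfl
  · exact ⟨T, hTS, hT0, hTsum, by omega⟩
  · -- card T = 2p; find a proper zero-sum inside
    obtain ⟨x, hx⟩ := Multiset.exists_mem_of_ne_zero hT0
    obtain ⟨T₂, rfl⟩ := Multiset.exists_cons_of_mem hx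
    have hT₂card : 2 * p - 1 ≤ Multiset.card T₂ := by
      simp only [Multiset.card_cons] at hc; omega
    obtain ⟨U, hUT₂, hU0, hUsum⟩ := lemA p hp T₂ hT₂card
    have hUT : U ≤ x ::ₘ T₂ := hUT₂.trans (Multiset.le_cons_self _ _)
    rcases le_or_gt (Multiset.card U) p with hUc | hUc
    · exact ⟨U, hUT.trans hTS, hU0, hUsum, hUc⟩
    · refine ⟨x ::ₘ T₂ - U, (Multiset.sub_le_self _ _).trans hTS, ?_, ?_, ?_⟩
      · intro h0
        have hUcard : Multiset.card U ≤ Multiset.card T₂ := Multiset.card_le_card hUT₂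
        have : Multiset.card (x ::ₘ T₂ - U) = 0 := by rw [h0]; simp
        rw [Multiset.card_sub hUT] at this
        simp only [Multiset.card_cons] at this hc
        omega
      · have hrec : (x ::ₘ T₂ - U) + U = x ::ₘ T₂ := tsub_add_cancel_of_le hUT
        have : ((x ::ₘ T₂ - U) + U).sum = (0 : ZMod p × ZMod p) := by rw [hrec]; exact hTsum
        rw [Multiset.sum_add, hUsum, add_zero] at this
        exact this
      · have : Multiset.card (x ::ₘ T₂ - U) = 2 * p - Multiset.card U := by
          rw [Multiset.card_sub hUT]; simp only [Multiset.card_cons] at hc ⊢; omega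
        omega

lemma exists_sub_card {α : Type*} (S : Multiset α) (n : ℕ) (h : n ≤ Multiset.card S) :
    ∃ S₀ : Multiset α, S₀ ≤ S ∧ Multiset.card S₀ = n := by
  refine ⟨(S.toList.take n : List α), ?_, ?_⟩
  · calc ((S.toList.take n : List α) : Multiset α) ≤ (S.toList : Multiset α) :=
        Multiset.coe_le.mpr (S.toList.take_sublist n).subperm
      _ = S := Multiset.coe_toList S
  · simp only [Multiset.coe_card, List.length_take, Multiset.length_toList]
    omega

lemma upper (p : ℕ) (hp : p.Prime) : ∀ k, 0 < k →
    ∀ S : Multiset (ZMod p × ZMod p), k * p + p - 1 ≤ Multiset.card S →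
    ∃ T : Fin k → Multiset (ZMod p × ZMod p),
      (∑ i, T i) ≤ S ∧ ∀ i, T i ≠ 0 ∧ (T i).sum = 0 := by
  have hp2 := hp.two_le
  intro k
  induction k with
  | zero => omega
  | succ k ih =>
    intro _ S hS
    rcases Nat.eq_zero_or_pos k with rfl | hk
    · obtain ⟨T₀, hle, h0, hsum⟩ := lemA p hp S (by omega)
      refine ⟨fun _ => T₀, ?_, fun i => ⟨h0, hsum⟩⟩
      simpa using hle
    · have hmul : (k+1)*p = k*p + p := by ring
      have hkp : p ≤ k*p := Nat.le_mul_of_pos_left p hk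
      obtain ⟨S₀, hS₀S, hS₀card⟩ := exists_sub_card S (3 * p - 2) (by omega)
      obtain ⟨T₀, hT₀S₀, hT₀0, hT₀sum, hT₀card⟩ := lemB p hp S₀ hS₀card
      have hT₀S : T₀ ≤ S := hT₀S₀.trans hS₀S
      have hcard' : k * p + p - 1 ≤ Multiset.card (S - T₀) := by
        rw [Multiset.card_sub hT₀S]
        have := Multiset.card_le_card hT₀S
        omega
      obtain ⟨T', hT'le, hT'p⟩ := ih hk (S - T₀) hcard'
      refine ⟨Fin.cons T₀ T', ?_, ?_⟩
      · rw [Fin.sum_cons]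
        exact (le_tsub_iff_left hT₀S).mp hT'le
      · intro i
        refine Fin.cases ?_ ?_ i
        · exact ⟨hT₀0, hT₀sum⟩
        · intro j; simpa using hT'p j

lemma decomp {α : Type*} [DecidableEq α] (x y : α) (hxy : x ≠ y) (m n : ℕ)
    (M : Multiset α) (hM : M ≤ Multiset.replicate m x + Multiset.replicate n y) :
    M = Multiset.replicate (M.count x) x + Multiset.replicate (M.count y) y ∧
      M.count x ≤ m ∧ M.count y ≤ n := by
  have hcx : M.count x ≤ m := by
    have := Multiset.count_le_of_le x hM
    simpa [Multiset.count_replicate, hxy.symm] using this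
  have hcy : M.count y ≤ n := by
    have := Multiset.count_le_of_le y hM
    simpa [Multiset.count_replicate, hxy] using this
  refine ⟨?_, hcx, hcy⟩
  ext b
  rw [Multiset.count_add, Multiset.count_replicate, Multiset.count_replicate]
  by_cases hbx : x = b
  · subst hbx
    rw [if_pos rfl, if_neg (Ne.symm hxy), add_zero]
  · by_cases hby : y = b
    · subst hby
      rw [if_neg hbx, if_pos rfl, zero_add]
    · rw [if_neg hbx, if_neg hby, add_zero]
      rw [Multiset.count_eq_zero]
      intro hbM
      have := Multiset.mem_of_le hM hbM
      rcases Multiset.mem_add.mp this with h | h <;>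
        [exact hbx (Multiset.eq_of_mem_replicate h).symm;
         exact hby (Multiset.eq_of_mem_replicate h).symm]

lemma lower (p k : ℕ) (hp : p.Prime) (hk : 0 < k) (t : ℕ)
    (ht : ∀ S : Multiset (ZMod p × ZMod p), t ≤ Multiset.card S →
        ∃ T : Fin k → Multiset (ZMod p × ZMod p),
          (∑ i, T i) ≤ S ∧ ∀ i, T i ≠ 0 ∧ (T i).sum = 0) :
    k * p + p - 1 ≤ t := by
  haveI : Fact (1 < p) := ⟨hp.one_lt⟩
  by_contra hcon
  push_neg at hcon
  have hp2 := hp.two_le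
  have hkp : p ≤ k*p := Nat.le_mul_of_pos_left p hk
  set e1 : ZMod p × ZMod p := (1, 0) with he1
  set e2 : ZMod p × ZMod p := (0, 1) with he2
  have hne : e1 ≠ e2 := by
    simp only [he1, he2, Prod.mk.injEq, ne_eq, not_and]
    intro h; exact absurd h one_ne_zero
  set S : Multiset (ZMod p × ZMod p) :=
    Multiset.replicate (k*p - 1) e1 + Multiset.replicate (p - 1) e2 with hSdef
  have hScard : Multiset.card S = k*p - 1 + (p - 1) := by simp [hSdef]
  obtain ⟨T, hTle, hTp⟩ := ht S (by omega)
  -- each T i ≤ S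
  have hTiS : ∀ i, T i ≤ S := fun i =>
    le_trans (Finset.single_le_sum (f := T) (fun j _ => zero_le) (Finset.mem_univ i)) hTle
  -- a i multiples of p, positive; b i = 0
  have key : ∀ i, p ≤ (T i).count e1 ∧ (T i).count e2 = 0 := by
    intro i
    obtain ⟨hrep, hax, hby⟩ := decomp e1 e2 hne _ _ (T i) (hTiS i)
    obtain ⟨hT0, hTsum⟩ := hTp i
    have hsum : ((T i).count e1 : ZMod p) = 0 ∧ ((T i).count e2 : ZMod p) = 0 := by
      have hs1 : (Multiset.replicate ((T i).count e1) e1).sum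
          = (((T i).count e1 : ZMod p), (0 : ZMod p)) := by
        rw [Multiset.sum_replicate, he1]
        simp [Prod.ext_iff, nsmul_eq_mul]
      have hs2 : (Multiset.replicate ((T i).count e2) e2).sum
          = ((0 : ZMod p), ((T i).count e2 : ZMod p)) := by
        rw [Multiset.sum_replicate, he2]
        simp [Prod.ext_iff, nsmul_eq_mul]
      have : (T i).sum = (((T i).count e1 : ZMod p), ((T i).count e2 : ZMod p)) := by
        conv_lhs => rw [hrep]
        rw [Multiset.sum_add, hs1, hs2, Prod.mk_add_mk, add_zero, zero_add]
      rw [hTsum] at this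
      exact ⟨congrArg Prod.fst this.symm, congrArg Prod.snd this.symm⟩
    have hdvd1 : p ∣ (T i).count e1 := (ZMod.natCast_eq_zero_iff _ _).mp hsum.1
    have hdvd2 : p ∣ (T i).count e2 := (ZMod.natCast_eq_zero_iff _ _).mp hsum.2
    have hb0 : (T i).count e2 = 0 := Nat.eq_zero_of_dvd_of_lt hdvd2 (by omega)
    refine ⟨?_, hb0⟩
    rcases Nat.eq_zero_or_pos ((T i).count e1) with ha0 | hapos
    · exfalso
      apply hT0
      rw [hrep, ha0, hb0]
      simp
    · exact Nat.le_of_dvd hapos hdvd1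
  -- sum of counts
  have hsumcount : (∑ i, (T i).count e1) ≤ k*p - 1 := by
    have h1 : Multiset.count e1 (∑ i, T i) = ∑ i, (T i).count e1 := Multiset.count_sum'
    have h2 : Multiset.count e1 (∑ i, T i) ≤ Multiset.count e1 S :=
      Multiset.count_le_of_le e1 hTle
    have h3 : Multiset.count e1 S = k*p - 1 := by
      simp [hSdef, Multiset.count_replicate, hne.symm, Multiset.count_replicate_self]
    omega
  have hge : k * p ≤ ∑ i, (T i).count e1 := by
    calc k * p = ∑ _i : Fin k, p := by simp [mul_comm]
      _ ≤ ∑ i, (T i).count e1 := Finset.sum_le_sum fun i _ => (key i).1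
  omega


/-- The generalized Davenport constant: `D_k(C_p × C_p) = kp + p − 1`. Namely,
`kp + p − 1` is the least `t` such that every sequence over `C_p × C_p` of
length `≥ t` contains `k` nonempty pairwise disjoint zero-sum subsequences. -/
theorem generalized_davenport_CpCp (p k : ℕ) (hp : p.Prime) (hk : 0 < k) :
    IsLeast {t : ℕ | ∀ S : Multiset (ZMod p × ZMod p), t ≤ Multiset.card S →
        ∃ T : Fin k → Multiset (ZMod p × ZMod p),
          (∑ i, T i) ≤ S ∧ ∀ i, T i ≠ 0 ∧ (T i).sum = 0}
      (k * p + p - 1) := by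
  constructor
  · intro S hS
    exact upper p hp k hk S hS
  · intro t ht
    exact lower p k hp hk t ht
end
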